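/- The function σ₂ = H₂^{1/2} is strictly concave on Γ₊ in the sense that if ξ ∈ ℝⁿ is nonzero, D²σ₂(κ)(ξ, ·) = 0 and Σᵢ κᵢ ξⁱ = 0, then ξ = 0; equivalently, the kernel of the Hessian D²σ₂(κ) is exactly the line spanned by κ. -/

import Mathlib

open Finset

/-- `F = √(H² - |A|²) = √(2 H₂)`, as in the paper's proof for `σ₂`. -/
noncomputable def Fsigma2 (n : ℕ) (κ : Fin n → ℝ) : ℝ :=
  Real.sqrt ((∑ i, κ i) ^ 2 - ∑ i, (κ i) ^ 2)

/-- The Hessian of `F`: `F_{ij} = -F⁻³(H-κᵢ)(H-κⱼ) + F⁻¹(1-δᵢⱼ)`. -/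
noncomputable def Fsigma2Hess (n : ℕ) (κ : Fin n → ℝ) (i j : Fin n) : ℝ :=
  -((Fsigma2 n κ) ^ 3)⁻¹ * ((∑ l, κ l) - κ i) * ((∑ l, κ l) - κ j)
    + (Fsigma2 n κ)⁻¹ * (if i = j then 0 else 1)

/-- σ₂ is strictly concave on Γ₊: if `D²σ₂(κ)(ξ,·) = 0` and
`∑ κᵢ ξᵢ = 0` then `ξ = 0`; i.e. the kernel of the Hessian is the line `ℝκ`. -/
theorem sigma2_strictly_concave (n : ℕ) (hn : 2 ≤ n)
    (κ : Fin n → ℝ) (hκ : ∀ i, 0 < κ i) (ξ : Fin n → ℝ)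
    (hker : ∀ i, ∑ j, Fsigma2Hess n κ i j * ξ j = 0)
    (horth : ∑ i, κ i * ξ i = 0) :
    ξ = 0 := by
  set H := ∑ i, κ i with hH
  set Q := ∑ i, (κ i) ^ 2 with hQ
  have hne : (univ : Finset (Fin n)).Nonempty := ⟨⟨0, by omega⟩, mem_univ _⟩
  have hκH : ∀ i, κ i < H := by
    intro i
    have hpos : 0 < ∑ j ∈ univ.erase i, κ j := by
      apply Finset.sum_pos (fun j _ => hκ j)
      have : 1 ≤ (univ.erase i).card := by
        rw [Finset.card_erase_of_mem (mem_univ i), card_univ, Fintype.card_fin]; omega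
      exact Finset.card_pos.mp (by omega)
    have hadd := Finset.add_sum_erase univ κ (mem_univ i)
    rw [← hH] at hadd
    linarith
  have hQpos : 0 < Q := Finset.sum_pos (fun i _ => pow_pos (hκ i) 2) hne
  have hF2pos : 0 < H ^ 2 - Q := by
    have h1 : Q < H * H := by
      calc Q = ∑ i, κ i * κ i := by simp [hQ, sq]
        _ < ∑ i, κ i * H :=
            Finset.sum_lt_sum_of_nonempty hne
              (fun i _ => mul_lt_mul_of_pos_left (hκH i) (hκ i))
        _ = H * H := by rw [← Finset.sum_mul, ← hH]
    nlinarith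
  set F := Fsigma2 n κ with hFdef
  have hF2 : F ^ 2 = H ^ 2 - Q := by
    rw [hFdef, Fsigma2, Real.sq_sqrt hF2pos.le]
  have hFpos : 0 < F := Real.sqrt_pos.mpr hF2pos
  have hFne : F ≠ 0 := hFpos.ne'
  set S := ∑ i, ξ i with hS
  have hsum1 : ∑ j, (H - κ j) * ξ j = H * S := by
    rw [Finset.sum_congr rfl (fun j _ => by ring :
      ∀ j ∈ univ, (H - κ j) * ξ j = H * ξ j - κ j * ξ j),
      Finset.sum_sub_distrib, ← Finset.mul_sum, horth, sub_zero, ← hS]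
  have key : ∀ i, F ^ 2 * ξ i = F ^ 2 * S - H * S * (H - κ i) := by
    intro i
    have hite : ∑ j, (if i = j then (0:ℝ) else ξ j) = S - ξ i := by
      have h1 : ∑ j, (if i = j then (0:ℝ) else ξ j)
          = ∑ j, ξ j - ∑ j, (if i = j then ξ j else 0) := by
        rw [← Finset.sum_sub_distrib]
        apply Finset.sum_congr rfl
        intro j _
        by_cases h : i = j <;> simp [h]
      rw [h1, Finset.sum_ite_eq univ i ξ]
      simp [hS]
    have hexp : ∑ j, Fsigma2Hess n κ i j * ξ j
        = -(F ^ 3)⁻¹ * (H - κ i) * (H * S) + F⁻¹ * (S - ξ i) := by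
      calc ∑ j, Fsigma2Hess n κ i j * ξ j
          = ∑ j, ((-(F ^ 3)⁻¹ * (H - κ i)) * ((H - κ j) * ξ j)
              + F⁻¹ * (if i = j then (0:ℝ) else ξ j)) := by
            apply Finset.sum_congr rfl
            intro j _
            simp only [Fsigma2Hess, ← hFdef, ← hH]
            by_cases h : i = j <;> simp [h] <;> ring
        _ = (-(F ^ 3)⁻¹ * (H - κ i)) * (∑ j, (H - κ j) * ξ j)
              + F⁻¹ * (∑ j, (if i = j then (0:ℝ) else ξ j)) := by
            rw [Finset.sum_add_distrib, Finset.mul_sum, Finset.mul_sum]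
        _ = -(F ^ 3)⁻¹ * (H - κ i) * (H * S) + F⁻¹ * (S - ξ i) := by
            rw [hsum1, hite]
    have h := hker i
    rw [hexp] at h
    field_simp at h
    have h' : ((κ i - H) * (H * S) + (S - ξ i) * F ^ 2) * F = 0 * F := by
      linear_combination F * h
    linear_combination -(mul_right_cancel₀ hFne h')
  have hsum2 : F ^ 2 * S = (n : ℝ) * (F ^ 2 * S) - H * S * ((n : ℝ) * H - H) := by
    have h1 : ∑ i, F ^ 2 * ξ i = F ^ 2 * S := by rw [← Finset.mul_sum, ← hS]
    have h2 : ∑ i, (F ^ 2 * S - H * S * (H - κ i))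
        = (n : ℝ) * (F ^ 2 * S) - H * S * ((n : ℝ) * H - H) := by
      rw [Finset.sum_sub_distrib, Finset.sum_const, ← Finset.mul_sum, Finset.sum_sub_distrib,
        Finset.sum_const, ← hH]
      simp [card_univ]
    calc F ^ 2 * S = ∑ i, F ^ 2 * ξ i := h1.symm
      _ = ∑ i, (F ^ 2 * S - H * S * (H - κ i)) := Finset.sum_congr rfl (fun i _ => key i)
      _ = (n : ℝ) * (F ^ 2 * S) - H * S * ((n : ℝ) * H - H) := h2
  have hSQ : ((n : ℝ) - 1) * S * Q = 0 := by
    linear_combination hsum2 + ((n : ℝ) - 1) * S * hF2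
  have hn1 : ((n : ℝ) - 1) ≠ 0 := by
    have : (2 : ℝ) ≤ (n : ℝ) := by exact_mod_cast hn
    linarith
  have hS0 : S = 0 := by
    rcases mul_eq_zero.mp hSQ with h | h
    · rcases mul_eq_zero.mp h with h' | h'
      · exact absurd h' hn1
      · exact h'
    · exact absurd h hQpos.ne'
  funext i
  have := key i
  rw [hS0] at this
  have hF2ne : F ^ 2 ≠ 0 := pow_ne_zero 2 hFne
  have h0 : F ^ 2 * ξ i = 0 := by linear_combination this
  have : ξ i = 0 := (mul_eq_zero.mp h0).resolve_left hF2ne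
  simpa using this
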